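/- For k ≥ r ≥ 1 and t ≥ 0, let π be a partition in C(k,r) whose largest odd part is 2t+1. Then: (1) if there is a 2-marked part 2t+2 in GG(π), it is of starting type s₀ or s₂; (2) if there is a 2-marked part 2t+4 in GG(π), it is of starting type s₃. -/

import Mathlib

namespace Bressoud

/-- A partition: a weakly decreasing list of positive integers. -/
structure Partition where
  parts : List ℕ
  pos : ∀ x ∈ parts, 0 < x
  sorted : parts.Pairwise (· ≥ ·)

namespace Partition

/-- `|π|`, the sum of the parts of `π`. -/
def size (π : Partition) : ℕ := π.parts.sum

/-- `ℓ(π)`, the number of parts of `π`. -/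
def numParts (π : Partition) : ℕ := π.parts.length

end Partition

lemma exists_pos_not_mem (s : List ℕ) : ∃ n, 0 < n ∧ n ∉ s := by
  refine ⟨s.sum + 1, Nat.succ_pos _, fun h => ?_⟩
  have := List.single_le_sum (l := s) (fun x _ => Nat.zero_le x) _ h
  omega

/-- The least positive integer not occurring in `s`. -/
def mex1 (s : List ℕ) : ℕ := Nat.find (exists_pos_not_mem s)

/-- Parts `p ≥ q` conflict (must receive different marks) when `p - q ≤ 2`,
with strict inequality when `p` is odd. -/
def conflict (p q : ℕ) : Bool :=
  if p % 2 = 1 then decide (p - q < 2) else decide (p - q ≤ 2)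

/-- Greedy computation of the Göllnitz–Gordon marking: the parts are processed
from smallest to largest (second argument: remaining parts in increasing
order; first argument: already processed parts with their marks), and each
part receives the least positive mark different from the marks of all already
processed conflicting parts. -/
def ggAux : List (ℕ × ℕ) → List ℕ → List (ℕ × ℕ)
  | acc, [] => acc
  | acc, p :: rest =>
      ggAux ((p, mex1 ((acc.filter fun q => conflict p q.1).map Prod.snd)) :: acc) rest

/-- The Göllnitz–Gordon marking `GG(π)` of `π`, as a list of (part, mark)
pairs in decreasing order of parts. -/
def ggMarks (π : Partition) : List (ℕ × ℕ) := ggAux [] π.parts.reverse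

/-- There is an `m`-marked part equal to `x` in `GG(π)`. -/
def Marked (π : Partition) (x m : ℕ) : Prop := (x, m) ∈ ggMarks π

instance (π : Partition) (x m : ℕ) : Decidable (Marked π x m) := by
  unfold Marked; infer_instance

/-- The `i`-th row of `GG(π)`: the `i`-marked parts, in decreasing order. -/
def row (π : Partition) (i : ℕ) : List ℕ :=
  ((ggMarks π).filter fun q => q.2 == i).map Prod.fst

/-- `N_i(π)`: the number of `i`-marked parts of `π`. -/
def Nmk (π : Partition) (i : ℕ) : ℕ := (row π i).length

/-- `π^{(i)}_j` as a natural number (meaningful for `1 ≤ j ≤ N_i(π)`;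
junk value `0` otherwise). -/
def nth (π : Partition) (i j : ℕ) : ℕ := (row π i).getD (j - 1) 0

/-- The canonical embedding of the natural numbers into `EReal`. -/
noncomputable def natE (n : ℕ) : EReal := ((n : ℝ) : EReal)

/-- `π^{(i)}_j` as an extended real, with the conventions `π^{(i)}_0 = +∞`
and `π^{(i)}_j = -∞` for `j > N_i(π)`. -/
noncomputable def rowVal (π : Partition) (i j : ℕ) : EReal :=
  if j = 0 then ⊤
  else
    match (row π i)[j - 1]? with
    | some x => natE x
    | none => ⊥

/-- The largest `l ≥ 0` such that there is no odd part of `π` greater than or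
equal to `π^{(2)}_l` (the indices `1 ≤ j ≤ N₂(π)` with this property form an
initial segment, so this is also their number). -/
def bigL (π : Partition) : ℕ :=
  ((List.range' 1 (Nmk π 2)).filter fun j =>
    decide (∀ x ∈ π.parts, x % 2 = 1 → x < nth π 2 j)).length

/-- `startPair π b = (starting type of π^{(2)}_b, s_b(π))` for `1 ≤ b ≤ N₂(π)`.
Starting types are encoded by integers: `-1` stands for `s₋₁`, and `0,1,2,3`
for `s₀,s₁,s₂,s₃`; the value `9` is a junk value used when no case applies. -/
def startPair (π : Partition) : ℕ → ℤ × ℕ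
  | 0 => (9, 0)
  | b + 1 =>
    let v := nth π 2 (b + 1)
    if bigL π < b + 1 then (-1, 0)
    else
      let okLow : Bool :=
        if b = 0 then !decide ((v + 2) ∈ π.parts)
        else !decide (Marked π (v + 2) 1) || decide ((startPair π b).2 = v + 2)
      let ok2 : Bool :=
        if b = 0 then decide (Marked π (v + 2) 1)
        else decide (Marked π (v + 2) 1) && !decide ((startPair π b).2 = v + 2)
      if decide (Marked π (v - 1) 1) && okLow then (0, v - 1)
      else if decide (Marked π (v - 2) 1) && okLow then (1, v - 2)
      else if ok2 then (2, v + 2)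
      else if decide (Marked π v 1) then (3, v)
      else (9, 0)

/-- The starting type of `π^{(2)}_b`, encoded as an integer. -/
def startType (π : Partition) (b : ℕ) : ℤ := (startPair π b).1

/-- The set `C(k,r)`: partitions with no repeated odd part, in which the parts
equal to `1` and `2` have marks at most `r - 1`, and whose Göllnitz–Gordon
marking has at most `k - 1` rows. -/
def C (k r : ℕ) : Set Partition :=
  { π | (∀ x, x % 2 = 1 → π.parts.count x ≤ 1) ∧
        (∀ x m, Marked π x m → x ≤ 2 → m ≤ r - 1) ∧
        (∀ x m, Marked π x m → m ≤ k - 1) }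

/-- The set `C_<(k,r|p,t)`. -/
noncomputable def Clt (k r p t : ℕ) : Set Partition :=
  { π | π ∈ C k r ∧
        (∀ x ∈ π.parts, x % 2 = 1 → x < 2 * t + 1) ∧
        rowVal π 2 (p + 1) < natE (2 * t + 1) ∧
        natE (2 * t + 1) < rowVal π 2 p ∧
        (rowVal π 2 p = natE (2 * t + 2) →
          startType π p = 2 ∨ startType π p = 3) ∧
        (rowVal π 2 (p + 1) = natE (2 * t) →
          startType π (p + 1) = 0 ∨ startType π (p + 1) = 1) }

/-- The set `C_=(k,r|p,t)`. -/
noncomputable def Ceq (k r p t : ℕ) : Set Partition :=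
  { π | π ∈ C k r ∧
        (2 * t + 1) ∈ π.parts ∧
        (∀ x ∈ π.parts, x % 2 = 1 → x ≤ 2 * t + 1) ∧
        (∀ m, Marked π (2 * t + 1) m → m ≤ 2) ∧
        natE (2 * t + 2) ≤ rowVal π 2 p ∧
        rowVal π 2 (p + 1) ≤ natE (2 * t + 2) ∧
        ((∃ j, 1 ≤ j ∧ j ≤ Nmk π 2 ∧ nth π 2 j = 2 * t + 2 ∧ startType π j = 0) →
          rowVal π 2 (p + 1) = natE (2 * t + 2) ∧
          ∃ i, 1 ≤ i ∧ i ≤ p + 1 ∧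
            nth π 2 i = 2 * t + 2 + 4 * (p + 1 - i) ∧
            π.parts.count (2 * t + 2 + 4 * (p + 1 - i)) = 1) ∧
        ((∃ j, 1 ≤ j ∧ j ≤ Nmk π 2 ∧ nth π 2 j = 2 * t + 2 ∧ startType π j = 2) →
          rowVal π 2 p = natE (2 * t + 2)) ∧
        ((2 * t + 2) ∈ π.parts → ¬ Marked π (2 * t + 2) 2 →
          rowVal π 2 p = natE (2 * t + 4) ∧ startType π p = 3 ∧
          ∃ i, 1 ≤ i ∧ i ≤ p ∧
            nth π 2 i = 2 * t + 4 + 4 * (p - i) ∧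
            (2 * t + 4 + 4 * (p - i) + 2) ∉ π.parts) }

/-- The first starting cluster index `p₁` of `π` (with `p₀ = p + 1`): the least
`j ≥ 1` such that `π^{(2)}_j = π^{(2)}_p + 4(p - j)` and all of
`π^{(2)}_j, …, π^{(2)}_p` have the same starting type as `π^{(2)}_p`. -/
def firstCluster (π : Partition) (p : ℕ) : ℕ :=
  ((List.range' 1 p).filter fun j =>
    (List.range' j (p + 1 - j)).all fun i =>
      decide (nth π 2 i = nth π 2 p + 4 * (p - i)) &&
      decide (startType π i = startType π p)).headD p

/-- The set `ℰ(k,r)` of partitions in `C(k,r)` with no odd parts. -/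
def E (k r : ℕ) : Set Partition :=
  { π | π ∈ C k r ∧ ∀ x ∈ π.parts, x % 2 = 0 }

/-- `C_<(k,r|m) = ⋃_{p+t=m} C_<(k,r|p,t)`. -/
noncomputable def Cltm (k r m : ℕ) : Set Partition :=
  { π | ∃ p t, p + t = m ∧ π ∈ Clt k r p t }

/-- `C_=(k,r|m) = ⋃_{p+t=m} C_=(k,r|p,t)`. -/
noncomputable def Ceqm (k r m : ℕ) : Set Partition :=
  { π | ∃ p t, p + t = m ∧ π ∈ Ceq k r p t }

/-- `I_N`: partitions into distinct odd parts, each at least `2N + 1`. -/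
def Iset (N : ℕ) : Set Partition :=
  { ζ | (∀ x ∈ ζ.parts, x % 2 = 1 ∧ 2 * N + 1 ≤ x) ∧ ζ.parts.Nodup }

/-- `F(3,3)`: pairs `(π, ζ)` with `π ∈ ℰ(3,3)` and `ζ ∈ I_{N₂(π)}`. -/
noncomputable def F33 : Set (Partition × Partition) :=
  { pq | pq.1 ∈ E 3 3 ∧ pq.2 ∈ Iset (Nmk pq.1 2) }



/-! ### Auxiliary lemmas for Corollary 2.12 -/

lemma mex1_pos (s : List ℕ) : 0 < mex1 s := (Nat.find_spec (exists_pos_not_mem s)).1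

lemma mex1_not_mem (s : List ℕ) : mex1 s ∉ s := (Nat.find_spec (exists_pos_not_mem s)).2

lemma mem_of_lt_mex1 {s : List ℕ} {n : ℕ} (h0 : 0 < n) (h : n < mex1 s) : n ∈ s := by
  by_contra hn
  exact Nat.find_min (exists_pos_not_mem s) h ⟨h0, hn⟩

/-- The marking invariant: each entry's mark is the mex of the marks of the
conflicting entries below it. -/
def GoodList : List (ℕ × ℕ) → Prop
  | [] => True
  | e :: tl => e.2 = mex1 ((tl.filter fun q => conflict e.1 q.1).map Prod.snd) ∧ GoodList tl

lemma goodList_ggAux (l : List ℕ) : ∀ acc, GoodList acc → GoodList (ggAux acc l) := by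
  induction l with
  | nil => intro acc h; exact h
  | cons p rest ih => intro acc h; exact ih _ ⟨rfl, h⟩

lemma GoodList.suffix {l₁ l₂ : List (ℕ × ℕ)} (h : GoodList (l₁ ++ l₂)) : GoodList l₂ := by
  induction l₁ with
  | nil => exact h
  | cons a l ih => exact ih h.2

lemma goodList_ggMarks (π : Partition) : GoodList (ggMarks π) :=
  goodList_ggAux _ _ trivial

lemma map_fst_ggAux (l : List ℕ) :
    ∀ acc, (ggAux acc l).map Prod.fst = l.reverse ++ acc.map Prod.fst := by
  induction l with
  | nil => intro acc; simp [ggAux]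
  | cons p rest ih => intro acc; simp [ggAux, ih]

lemma map_fst_ggMarks (π : Partition) : (ggMarks π).map Prod.fst = π.parts := by
  simp [ggMarks, map_fst_ggAux]

lemma marked_mem_parts {π : Partition} {x m : ℕ} (h : (x, m) ∈ ggMarks π) : x ∈ π.parts := by
  rw [← map_fst_ggMarks π]
  exact List.mem_map_of_mem (f := Prod.fst) h

lemma ggMarks_sorted (π : Partition) :
    (ggMarks π).Pairwise (fun a b : ℕ × ℕ => b.1 ≤ a.1) := by
  have := π.sorted
  rw [← map_fst_ggMarks π] at this
  rw [List.pairwise_map] at this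
  exact this

/-- Ordering lemma: an entry with smaller part occurs strictly after one with a
larger part. -/
lemma mem_suffix_of_lt {L : List (ℕ × ℕ)} (hs : L.Pairwise (fun a b : ℕ × ℕ => b.1 ≤ a.1))
    {x mx q nq : ℕ} (hx : (x, mx) ∈ L) (hq : (q, nq) ∈ L) (hlt : q < x) :
    ∃ l₁ l₂, L = l₁ ++ (x, mx) :: l₂ ∧ (q, nq) ∈ l₂ := by
  induction L with
  | nil => simp at hx
  | cons h tl ih =>
    rcases List.mem_cons.1 hx with hx1 | hx1
    · subst hx1
      rcases List.mem_cons.1 hq with hq1 | hq1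
      · exact absurd (congrArg Prod.fst hq1) (by simp; omega)
      · exact ⟨[], tl, rfl, hq1⟩
    · rcases List.mem_cons.1 hq with hq1 | hq1
      · exfalso
        have := (List.pairwise_cons.1 hs).1 _ hx1
        rw [← hq1] at this
        simp at this; omega
      · obtain ⟨l₁, l₂, hL, hm⟩ := ih (List.pairwise_cons.1 hs).2 hx1 hq1
        exact ⟨h :: l₁, l₂, by rw [hL]; rfl, hm⟩


/-- Any mark in `GG(π)` is the mex of the marks of the conflicting lower
entries (for any decomposition exhibiting the entry). -/
lemma mark_eq_mex {π : Partition} {l₁ l₂ : List (ℕ × ℕ)} {x m : ℕ}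
    (hL : ggMarks π = l₁ ++ (x, m) :: l₂) :
    m = mex1 ((l₂.filter fun q => conflict x q.1).map Prod.snd) := by
  have := goodList_ggMarks π
  rw [hL] at this
  exact this.suffix.1

lemma mark_pos {π : Partition} {x m : ℕ} (h : (x, m) ∈ ggMarks π) : 1 ≤ m := by
  obtain ⟨l₁, l₂, hL⟩ := List.append_of_mem h
  rw [mark_eq_mex hL]
  exact mex1_pos _

/-- Two conflicting entries (the smaller strictly below) get different marks. -/
lemma mark_ne_of_conflict {π : Partition} {x m q n : ℕ}
    (hx : (x, m) ∈ ggMarks π) (hq : (q, n) ∈ ggMarks π) (hlt : q < x)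
    (hc : conflict x q = true) : n ≠ m := by
  obtain ⟨l₁, l₂, hL, hmem⟩ := mem_suffix_of_lt (ggMarks_sorted π) hx hq hlt
  have hm := mark_eq_mex hL
  intro he
  apply mex1_not_mem ((l₂.filter fun q => conflict x q.1).map Prod.snd)
  rw [← hm, ← he]
  exact List.mem_map_of_mem (f := Prod.snd) (List.mem_filter.2 ⟨hmem, hc⟩)

/-- Entries strictly below `(x, m)` have parts at most `x`. -/
lemma le_of_mem_suffix {π : Partition} {l₁ l₂ : List (ℕ × ℕ)} {x m : ℕ}
    (hL : ggMarks π = l₁ ++ (x, m) :: l₂) {e : ℕ × ℕ} (he : e ∈ l₂) : e.1 ≤ x := by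
  have hs := ggMarks_sorted π
  rw [hL] at hs
  have := ((List.pairwise_append.1 hs).2.1)
  exact (List.pairwise_cons.1 this).1 e he

/-- If an entry has mark `> n ≥ 1`, some conflicting lower entry has mark `n`. -/
lemma exists_mark_in_suffix {π : Partition} {l₁ l₂ : List (ℕ × ℕ)} {x m n : ℕ}
    (hL : ggMarks π = l₁ ++ (x, m) :: l₂) (h1 : 1 ≤ n) (h2 : n < m) :
    ∃ q, (q, n) ∈ l₂ ∧ conflict x q = true ∧ q ≤ x := by
  have hm := mark_eq_mex hL
  have : n ∈ (l₂.filter fun q => conflict x q.1).map Prod.snd :=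
    mem_of_lt_mex1 h1 (hm ▸ h2)
  obtain ⟨e, hef, hes⟩ := List.mem_map.1 this
  obtain ⟨hel, hec⟩ := List.mem_filter.1 hef
  refine ⟨e.1, ?_, hec, le_of_mem_suffix hL hel⟩
  have : e = (e.1, n) := by rw [← hes]
  exact this ▸ hel

lemma suffix_subset {π : Partition} {l₁ l₂ : List (ℕ × ℕ)} {x m : ℕ}
    (hL : ggMarks π = l₁ ++ (x, m) :: l₂) {e : ℕ × ℕ} (he : e ∈ l₂) : e ∈ ggMarks π := by
  rw [hL]; exact List.mem_append_right _ (List.mem_cons_of_mem _ he)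

/-- If `x` occurs at most once in `π`, no entry below an `x`-entry has part `x`. -/
lemma not_fst_mem_suffix {π : Partition} {l₁ l₂ : List (ℕ × ℕ)} {x m : ℕ}
    (hL : ggMarks π = l₁ ++ (x, m) :: l₂) (hc : π.parts.count x ≤ 1) {n : ℕ} :
    (x, n) ∉ l₂ := by
  intro hmem
  have hp := map_fst_ggMarks π
  rw [hL] at hp
  have hx : x ∈ l₂.map Prod.fst := List.mem_map_of_mem (f := Prod.fst) hmem
  have : 2 ≤ π.parts.count x := by
    rw [← hp]
    simp only [List.map_append, List.map_cons, List.count_append, List.count_cons_self]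
    have := List.count_pos_iff.2 hx
    omega
  omega

/-- A lowest entry with a given part value. -/
lemma exists_lowest {L : List (ℕ × ℕ)} {x : ℕ} (h : x ∈ L.map Prod.fst) :
    ∃ m l₁ l₂, L = l₁ ++ (x, m) :: l₂ ∧ x ∉ l₂.map Prod.fst := by
  induction L with
  | nil => simp at h
  | cons e tl ih =>
    by_cases hx : x ∈ tl.map Prod.fst
    · obtain ⟨m, l₁, l₂, hL, hnm⟩ := ih hx
      exact ⟨m, e :: l₁, l₂, by rw [hL]; rfl, hnm⟩
    · rcases List.mem_cons.1 h with h1 | h1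
      · exact ⟨e.2, [], tl, by rw [h1]; rfl, hx⟩
      · exact absurd h1 hx


lemma conflict_even_iff {p q : ℕ} (hp : p % 2 = 0) : conflict p q = true ↔ p - q ≤ 2 := by
  unfold conflict
  rw [if_neg (by omega)]
  simp

lemma conflict_odd_iff {p q : ℕ} (hp : p % 2 = 1) : conflict p q = true ↔ p - q < 2 := by
  unfold conflict
  rw [if_pos hp]
  simp

/-- If `2t+1 ∈ π` then no part `2t+2` is 1-marked. -/
lemma not_marked_2t2 {π : Partition} {t : ℕ} (hmem : (2 * t + 1) ∈ π.parts)
    (hcount : π.parts.count (2 * t + 1) ≤ 1) : (2 * t + 2, 1) ∉ ggMarks π := by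
  intro h22
  have hx : (2 * t + 1) ∈ (ggMarks π).map Prod.fst := by rw [map_fst_ggMarks]; exact hmem
  obtain ⟨e, hel, hfst⟩ := List.mem_map.1 hx
  have he : (2 * t + 1, e.2) ∈ ggMarks π := by
    have : e = (2 * t + 1, e.2) := by rw [← hfst]
    exact this ▸ hel
  by_cases h1 : e.2 = 1
  · rw [h1] at he
    exact mark_ne_of_conflict h22 he (by omega)
      ((conflict_even_iff (by omega)).2 (by omega)) rfl
  · have hpos := mark_pos he
    obtain ⟨l₁, l₂, hL⟩ := List.append_of_mem he
    obtain ⟨q, hql, hqc, hqle⟩ := exists_mark_in_suffix hL le_rfl (by omega)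
    have hq2 : 2 * t + 1 - q < 2 := (conflict_odd_iff (by omega)).1 hqc
    have hqne : q ≠ 2 * t + 1 := by
      intro hq
      exact not_fst_mem_suffix hL hcount (hq ▸ hql)
    have hq20 : q = 2 * t := by omega
    subst hq20
    exact mark_ne_of_conflict h22 (suffix_subset hL hql) (by omega)
      ((conflict_even_iff (by omega)).2 (by omega)) rfl

/-- If `2t+2` is 2-marked then `2t+1` is 1-marked. -/
lemma marked_2t1_one {π : Partition} {t : ℕ} (hmem : (2 * t + 1) ∈ π.parts)
    (hcount : π.parts.count (2 * t + 1) ≤ 1) (h22 : (2 * t + 2, 2) ∈ ggMarks π) :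
    (2 * t + 1, 1) ∈ ggMarks π := by
  have hx : (2 * t + 1) ∈ (ggMarks π).map Prod.fst := by rw [map_fst_ggMarks]; exact hmem
  obtain ⟨e, hel, hfst⟩ := List.mem_map.1 hx
  have he : (2 * t + 1, e.2) ∈ ggMarks π := by
    have : e = (2 * t + 1, e.2) := by rw [← hfst]
    exact this ▸ hel
  by_cases h1 : e.2 = 1
  · exact h1 ▸ he
  · exfalso
    have hpos := mark_pos he
    have hne2 : e.2 ≠ 2 := mark_ne_of_conflict h22 he (by omega)
      ((conflict_even_iff (by omega)).2 (by omega))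
    obtain ⟨l₁, l₂, hL⟩ := List.append_of_mem he
    obtain ⟨q, hql, hqc, hqle⟩ := exists_mark_in_suffix hL (n := 2) (by omega) (by omega)
    have hq2 : 2 * t + 1 - q < 2 := (conflict_odd_iff (by omega)).1 hqc
    have hqne : q ≠ 2 * t + 1 := by
      intro hq
      exact not_fst_mem_suffix hL hcount (hq ▸ hql)
    have hq20 : q = 2 * t := by omega
    subst hq20
    exact mark_ne_of_conflict h22 (suffix_subset hL hql) (by omega)
      ((conflict_even_iff (by omega)).2 (by omega)) rfl

/-- If `2t+1` is the largest odd part and `2t+4 ∈ π` is not under a 1-marked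
`2t+2`, then some `2t+4` is 1-marked. -/
lemma marked_2t4_one_of_mem {π : Partition} {t : ℕ}
    (hmax : ∀ x ∈ π.parts, x % 2 = 1 → x ≤ 2 * t + 1)
    (hn2 : (2 * t + 2, 1) ∉ ggMarks π) (hp : (2 * t + 4) ∈ π.parts) :
    (2 * t + 4, 1) ∈ ggMarks π := by
  have hx : (2 * t + 4) ∈ (ggMarks π).map Prod.fst := by rw [map_fst_ggMarks]; exact hp
  obtain ⟨m, l₁, l₂, hL, hnotin⟩ := exists_lowest hx
  have hmm : (2 * t + 4, m) ∈ ggMarks π := by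
    rw [hL]; exact List.mem_append_right _ List.mem_cons_self
  by_cases h1 : m = 1
  · exact h1 ▸ hmm
  · exfalso
    have hpos := mark_pos hmm
    obtain ⟨q, hql, hqc, hqle⟩ := exists_mark_in_suffix hL le_rfl (by omega)
    have hq2 : 2 * t + 4 - q ≤ 2 := (conflict_even_iff (by omega)).1 hqc
    have hqmem : (q, 1) ∈ ggMarks π := suffix_subset hL hql
    have hqparts : q ∈ π.parts := marked_mem_parts hqmem
    have hqne4 : q ≠ 2 * t + 4 := by
      intro hq
      exact hnotin (hq ▸ List.mem_map_of_mem (f := Prod.fst) hql)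
    have hqne3 : q ≠ 2 * t + 3 := by
      intro hq
      have := hmax q hqparts (by omega)
      omega
    have : q = 2 * t + 2 := by omega
    exact hn2 (this ▸ hqmem)

/-- If `2t+1` is the largest odd part and `2t+4` is 2-marked, `2t+4` is also
1-marked. -/
lemma marked_2t4_one {π : Partition} {t : ℕ} (hmem : (2 * t + 1) ∈ π.parts)
    (hcount : π.parts.count (2 * t + 1) ≤ 1)
    (hmax : ∀ x ∈ π.parts, x % 2 = 1 → x ≤ 2 * t + 1)
    (h24 : (2 * t + 4, 2) ∈ ggMarks π) : (2 * t + 4, 1) ∈ ggMarks π := by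
  obtain ⟨l₁, l₂, hL⟩ := List.append_of_mem h24
  obtain ⟨q, hql, hqc, hqle⟩ := exists_mark_in_suffix hL le_rfl (by omega)
  have hq2 : 2 * t + 4 - q ≤ 2 := (conflict_even_iff (by omega)).1 hqc
  have hqmem : (q, 1) ∈ ggMarks π := suffix_subset hL hql
  have hqparts : q ∈ π.parts := marked_mem_parts hqmem
  have hqne2 : q ≠ 2 * t + 2 := by
    intro hq
    exact not_marked_2t2 hmem hcount (hq ▸ hqmem)
  have hqne3 : q ≠ 2 * t + 3 := by
    intro hq
    have := hmax q hqparts (by omega)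
    omega
  have : q = 2 * t + 4 := by omega
  exact this ▸ hqmem


lemma row_sorted (π : Partition) (i : ℕ) : (row π i).Pairwise (· ≥ ·) := by
  unfold row
  rw [List.pairwise_map]
  exact (ggMarks_sorted π).filter _

lemma nth_mem_ggMarks {π : Partition} {i j : ℕ} (h1 : 1 ≤ j) (h2 : j ≤ Nmk π i) :
    (nth π i j, i) ∈ ggMarks π := by
  have hlt : j - 1 < (row π i).length := by
    unfold Nmk at h2; omega
  have hget : nth π i j = (row π i).get ⟨j - 1, hlt⟩ := by
    unfold nth
    rw [List.getD_eq_getElem _ _ hlt]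
    rfl
  have hm : nth π i j ∈ row π i := hget ▸ (row π i).get_mem ⟨j - 1, hlt⟩
  unfold row at hm
  obtain ⟨e, hef, hfst⟩ := List.mem_map.1 hm
  obtain ⟨hel, hcond⟩ := List.mem_filter.1 hef
  have h2' : e.2 = i := by simpa using hcond
  have : e = (nth π i j, i) := by
    rw [← hfst, ← h2']
  exact this ▸ hel

lemma nth_anti {π : Partition} {i j j' : ℕ} (h1 : 1 ≤ j') (h : j' ≤ j)
    (h2 : j ≤ Nmk π i) : nth π i j ≤ nth π i j' := by
  rcases eq_or_lt_of_le h with rfl | hlt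
  · exact le_rfl
  · have hlt2 : j - 1 < (row π i).length := by unfold Nmk at h2; omega
    have hlt1 : j' - 1 < (row π i).length := by unfold Nmk at h2; omega
    have hs := row_sorted π i
    rw [List.pairwise_iff_get] at hs
    have := hs ⟨j' - 1, hlt1⟩ ⟨j - 1, hlt2⟩ (by simp; omega)
    unfold nth
    rw [List.getD_eq_getElem _ _ hlt2, List.getD_eq_getElem _ _ hlt1]
    exact this

lemma le_bigL {π : Partition} {j : ℕ} (h1 : 1 ≤ j) (h2 : j ≤ Nmk π 2)
    (h : ∀ x ∈ π.parts, x % 2 = 1 → x < nth π 2 j) : j ≤ bigL π := by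
  unfold bigL
  have hj : j + (Nmk π 2 - j) = Nmk π 2 := by omega
  have hsplit : List.range' 1 (Nmk π 2) =
      List.range' 1 j ++ List.range' (1 + 1 * j) (Nmk π 2 - j) := by
    rw [List.range'_append]
    congr 1
    omega
  rw [hsplit, List.filter_append, List.length_append]
  have hself : (List.range' 1 j).filter
      (fun i => decide (∀ x ∈ π.parts, x % 2 = 1 → x < nth π 2 i)) = List.range' 1 j := by
    apply List.filter_eq_self.2
    intro a ha
    have ha' : 1 ≤ a ∧ a < 1 + j := List.mem_range'_1.1 ha
    apply decide_eq_true
    intro x hx hodd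
    have := h x hx hodd
    have := nth_anti (i := 2) ha'.1 (by omega) h2
    omega
  rw [hself, List.length_range']
  omega

/-- Corollary 2.12: let `π ∈ C(k,r)` with largest odd part `2t+1`. Then a
2-marked `2t+2` in `GG(π)` is of starting type `s₀` or `s₂`, and a 2-marked
`2t+4` is of starting type `s₃`. -/
theorem starting_type_near_largest_odd (k r t : ℕ) (hrk : r ≤ k) (hr : 1 ≤ r)
    (π : Partition) (hπ : π ∈ C k r)
    (hmem : (2 * t + 1) ∈ π.parts)
    (hmax : ∀ x ∈ π.parts, x % 2 = 1 → x ≤ 2 * t + 1) :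
    (∀ j, 1 ≤ j → j ≤ Nmk π 2 → nth π 2 j = 2 * t + 2 →
      startType π j = 0 ∨ startType π j = 2) ∧
    (∀ j, 1 ≤ j → j ≤ Nmk π 2 → nth π 2 j = 2 * t + 4 →
      startType π j = 3) := by
  obtain ⟨hcount, hsmall, hrows⟩ := hπ
  have hcnt : π.parts.count (2 * t + 1) ≤ 1 := hcount _ (by omega)
  constructor
  · intro j hj1 hj2 hv
    obtain ⟨b, rfl⟩ : ∃ b, j = b + 1 := ⟨j - 1, by omega⟩
    have h22 : (2 * t + 2, 2) ∈ ggMarks π := by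
      have := nth_mem_ggMarks hj1 hj2
      rwa [hv] at this
    have h1 : (2 * t + 1, 1) ∈ ggMarks π := marked_2t1_one hmem hcnt h22
    have hbig : ¬ (bigL π < b + 1) := by
      have : b + 1 ≤ bigL π := le_bigL hj1 hj2
        (fun x hx ho => by have := hmax x hx ho; rw [hv]; omega)
      omega
    have hM1 : Marked π (2 * t + 1) 1 := h1
    have e1 : 2 * t + 2 - 1 = 2 * t + 1 := by omega
    have e2 : 2 * t + 2 - 2 = 2 * t := by omega
    have e4 : 2 * t + 2 + 2 = 2 * t + 4 := by omega
    simp only [startType, startPair]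
    rw [hv, if_neg hbig, e1, e2, e4]
    rcases b with _ | n
    · by_cases hp : (2 * t + 4) ∈ π.parts
      · have h4 : Marked π (2 * t + 4) 1 :=
          marked_2t4_one_of_mem hmax (not_marked_2t2 hmem hcnt) hp
        right
        simp [hM1, hp, h4]
      · left
        simp [hM1, hp]
    · by_cases hM4 : Marked π (2 * t + 4) 1
      · by_cases hS : (startPair π (n + 1)).2 = 2 * t + 4
        · left
          simp [hM1, hM4, hS]
        · right
          simp [hM1, hM4, hS]
      · left
        simp [hM1, hM4]
  · intro j hj1 hj2 hv
    obtain ⟨b, rfl⟩ : ∃ b, j = b + 1 := ⟨j - 1, by omega⟩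
    have h24 : (2 * t + 4, 2) ∈ ggMarks π := by
      have := nth_mem_ggMarks hj1 hj2
      rwa [hv] at this
    have hbig : ¬ (bigL π < b + 1) := by
      have : b + 1 ≤ bigL π := le_bigL hj1 hj2
        (fun x hx ho => by have := hmax x hx ho; rw [hv]; omega)
      omega
    have hM4 : Marked π (2 * t + 4) 1 := marked_2t4_one hmem hcnt hmax h24
    have hn3 : ¬ Marked π (2 * t + 3) 1 := fun h => by
      have := hmax _ (marked_mem_parts h) (by omega)
      omega
    have hn2 : ¬ Marked π (2 * t + 2) 1 := not_marked_2t2 hmem hcnt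
    have hn6 : ¬ Marked π (2 * t + 6) 1 := fun h =>
      mark_ne_of_conflict h hM4 (by omega)
        ((conflict_even_iff (by omega)).2 (by omega)) rfl
    have e1 : 2 * t + 4 - 1 = 2 * t + 3 := by omega
    have e2 : 2 * t + 4 - 2 = 2 * t + 2 := by omega
    have e4 : 2 * t + 4 + 2 = 2 * t + 6 := by omega
    simp only [startType, startPair]
    rw [hv, if_neg hbig, e1, e2, e4]
    rcases b with _ | n
    · simp [hn3, hn2, hn6, hM4]
    · simp [hn3, hn2, hn6, hM4]

end Bressoud
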